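/- Let 0 < d_1 ≤ d_2 ≤ … ≤ d_n and 0 ≤ s ≤ Σ_{i=1}^n (d_i − 1) be integers. Define m(a_1,…,a_n) = Π_{i=1}^n (d_i − a_i) for integers 0 ≤ a_i < d_i. Then the minimum of m(a_1,…,a_n) over all tuples with a_1 + ⋯ + a_n ≤ s equals (d_{k+1} − ℓ) · Π_{i=k+2}^n d_i, where k and ℓ are the unique integers with s = Σ_{i=1}^k (d_i − 1) + ℓ and 0 ≤ ℓ < d_{k+1} − 1 (with k = 0 and ℓ = s if s < d_1 − 1, and the empty product equal to 1 if k + 1 = n). -/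

import Mathlib

/-- Greedy value: consume as much as possible at each coordinate, left to right. -/
def gval : List ℕ → ℕ → ℕ
  | [], _ => 1
  | d :: L, s => (d - min (d - 1) s) * gval L (s - min (d - 1) s)

lemma gval_zero : ∀ L : List ℕ, gval L 0 = L.prod
  | [] => rfl
  | d :: L => by
      simp [gval, gval_zero L]

lemma gval_anti : ∀ (L : List ℕ) (s t : ℕ), s ≤ t → gval L t ≤ gval L s
  | [], _, _, _ => le_refl 1
  | d :: L, s, t, h => by
      simp only [gval]
      apply Nat.mul_le_mul
      · omega
      · exact gval_anti L _ _ (by omega)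

lemma gval_E : ∀ (L : List ℕ) (u t : ℕ), (∀ d ∈ L, u + t ≤ d) →
    u * L.prod ≤ (u + t) * gval L t
  | [], u, t, _ => by simp [gval]
  | d :: L, u, t, h => by
      rcases Nat.eq_zero_or_pos u with hu | hu
      · subst hu; simp
      · have hd : u + t ≤ d := h d (by simp)
        have hmin : min (d - 1) t = t := by omega
        simp only [gval, hmin, List.prod_cons, Nat.sub_self, gval_zero]
        have key : u * d ≤ (u + t) * (d - t) := by
          have hdt : d - t + t = d := by omega
          have hut : u ≤ d - t := by omega
          calc u * d = u * (d - t) + u * t := by rw [← Nat.mul_add, hdt]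
            _ ≤ u * (d - t) + (d - t) * t := by
                exact Nat.add_le_add_left (Nat.mul_le_mul_right t hut) _
            _ = (u + t) * (d - t) := by ring
        calc u * (d * L.prod) = (u * d) * L.prod := by ring
          _ ≤ ((u + t) * (d - t)) * L.prod := Nat.mul_le_mul_right _ key
          _ = (u + t) * ((d - t) * L.prod) := by ring

lemma gval_F : ∀ (L : List ℕ) (t r : ℕ), (∀ d ∈ L, r < d) → r ≤ t →
    gval L (t - r) ≤ (r + 1) * gval L t
  | [], t, r, _, _ => by simp [gval]
  | d :: L, t, r, h, hrt => by
      have hd : r < d := h d (by simp)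
      by_cases h1 : t ≤ d - 1
      · have hm1 : min (d - 1) t = t := by omega
        have hm2 : min (d - 1) (t - r) = t - r := by omega
        simp only [gval, hm1, hm2, Nat.sub_self, gval_zero]
        have e1 : d - (t - r) ≤ (r + 1) * (d - t) := by
          have hc : 1 ≤ d - t := by omega
          have hr : r ≤ r * (d - t) := by
            calc r = r * 1 := (mul_one r).symm
              _ ≤ r * (d - t) := Nat.mul_le_mul_left r hc
          have hexp : (r + 1) * (d - t) = d - t + r * (d - t) := by ring
          omega
        calc (d - (t - r)) * L.prod ≤ ((r + 1) * (d - t)) * L.prod :=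
              Nat.mul_le_mul_right _ e1
          _ = (r + 1) * ((d - t) * L.prod) := by ring
      · by_cases h2 : t - r ≤ d - 1
        · -- t > d - 1, t - r ≤ d - 1
          have hm1 : min (d - 1) t = d - 1 := by omega
          have hm2 : min (d - 1) (t - r) = t - r := by omega
          simp only [gval, hm1, hm2, Nat.sub_self, gval_zero]
          have hds : d - (d - 1) = 1 := by omega
          rw [hds]
          set t₁ := t - (d - 1) with ht₁
          set u := d - (t - r) with hu
          have hsum : u + t₁ = r + 1 := by omega
          have := gval_E L u t₁ (fun x hx => by have := h x (by simp [hx]); omega)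
          rw [hsum] at this
          calc (d - (t - r)) * L.prod = u * L.prod := rfl
            _ ≤ (r + 1) * gval L t₁ := this
            _ = (r + 1) * (1 * gval L (t - (d - 1))) := by rw [one_mul]
        · -- t - r > d - 1
          have hm1 : min (d - 1) t = d - 1 := by omega
          have hm2 : min (d - 1) (t - r) = d - 1 := by omega
          simp only [gval, hm1, hm2]
          have hds : d - (d - 1) = 1 := by omega
          rw [hds, one_mul, one_mul]
          have harg : t - r - (d - 1) = (t - (d - 1)) - r := by omega
          rw [harg]
          exact gval_F L (t - (d - 1)) r
            (fun x hx => h x (by simp [hx])) (by omega)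

lemma gval_B (d : ℕ) (D : List ℕ) (a t : ℕ) (ha : a < d)
    (hmon : ∀ x ∈ D, d ≤ x) :
    gval (d :: D) (a + t) ≤ (d - a) * gval D t := by
  by_cases h1 : a + t ≤ d - 1
  · have hm : min (d - 1) (a + t) = a + t := by omega
    simp only [gval, hm, Nat.sub_self, gval_zero]
    have := gval_E D (d - (a + t)) t (fun x hx => by have := hmon x hx; omega)
    have he : d - (a + t) + t = d - a := by omega
    rwa [he] at this
  · have hm : min (d - 1) (a + t) = d - 1 := by omega
    simp only [gval, hm]
    have hds : d - (d - 1) = 1 := by omega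
    rw [hds, one_mul]
    have harg : a + t - (d - 1) = t - (d - 1 - a) := by omega
    rw [harg]
    have := gval_F D t (d - 1 - a)
      (fun x hx => by have := hmon x hx; omega) (by omega)
    have he : d - 1 - a + 1 = d - a := by omega
    rwa [he] at this

/-- Main lower bound: any admissible tuple has product at least the greedy value. -/
lemma gval_main : ∀ (n : ℕ) (d a : Fin n → ℕ), Monotone d → (∀ i, a i < d i) →
    gval (List.ofFn d) (∑ i, a i) ≤ ∏ i, (d i - a i)
  | 0, d, a, _, _ => by simp [gval]
  | n + 1, d, a, hmono, ha => by
      rw [List.ofFn_succ, Fin.sum_univ_succ, Fin.prod_univ_succ]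
      calc gval (d 0 :: List.ofFn fun i => d i.succ) (a 0 + ∑ i : Fin n, a i.succ)
          ≤ (d 0 - a 0) * gval (List.ofFn fun i => d i.succ) (∑ i : Fin n, a i.succ) := by
            apply gval_B _ _ _ _ (ha 0)
            intro x hx
            rw [List.mem_ofFn] at hx
            obtain ⟨i, rfl⟩ := hx
            exact hmono (Fin.zero_le _)
        _ ≤ (d 0 - a 0) * ∏ i : Fin n, (d i.succ - a i.succ) := by
            apply Nat.mul_le_mul_left
            exact gval_main n (fun i => d i.succ) (fun i => a i.succ)
              (fun i j hij => hmono (Fin.succ_le_succ_iff.2 hij)) (fun i => ha i.succ)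

/-- The greedy value equals the closed formula. -/
lemma gval_formula : ∀ (k n : ℕ) (d : Fin n → ℕ) (hk : k < n) (ℓ : ℕ),
    (∀ i, 0 < d i) → ℓ < d ⟨k, hk⟩ - 1 →
    gval (List.ofFn d) ((∑ i : Fin n, if (i : ℕ) < k then d i - 1 else 0) + ℓ) =
      (d ⟨k, hk⟩ - ℓ) * ∏ i : Fin n, if k + 1 ≤ (i : ℕ) then d i else 1
  | 0, n, d, hk, ℓ, hd, hℓ => by
      obtain ⟨n, rfl⟩ : ∃ m, n = m + 1 := ⟨n - 1, by omega⟩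
      have h0 : d ⟨0, hk⟩ = d 0 := rfl
      have hm : min (d 0 - 1) ℓ = ℓ := by rw [h0] at hℓ; omega
      have hprod : (∏ i : Fin (n+1), if 0 + 1 ≤ (i : ℕ) then d i else 1) =
          ∏ i : Fin n, d i.succ := by
        rw [Fin.prod_univ_succ, if_neg (by simp), one_mul]
        exact Finset.prod_congr rfl fun i _ => if_pos (by simp [Fin.val_succ])
      have hs0 : (∑ i : Fin (n+1), if (i : ℕ) < 0 then d i - 1 else 0) = 0 := by simp
      rw [List.ofFn_succ, hs0, zero_add]
      simp only [gval, hm, Nat.sub_self, gval_zero, List.prod_ofFn]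
      rw [h0, hprod]
  | k + 1, n, d, hk, ℓ, hd, hℓ => by
      obtain ⟨n, rfl⟩ : ∃ m, n = m + 1 := ⟨n - 1, by omega⟩
      have hk' : k < n := by omega
      have hd0 : 0 < d 0 := hd 0
      have hsum : (∑ i : Fin (n+1), if (i : ℕ) < k + 1 then d i - 1 else 0) =
          (d 0 - 1) + ∑ i : Fin n, if (i : ℕ) < k then d i.succ - 1 else 0 := by
        rw [Fin.sum_univ_succ]
        congr 1
        · simp
      rw [List.ofFn_succ, hsum]
      have hm : min (d 0 - 1)
          ((d 0 - 1) + (∑ i : Fin n, if (i : ℕ) < k then d i.succ - 1 else 0) + ℓ) =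
          d 0 - 1 := by omega
      have harg : (d 0 - 1) + (∑ i : Fin n, if (i : ℕ) < k then d i.succ - 1 else 0) + ℓ
          - (d 0 - 1) =
          (∑ i : Fin n, if (i : ℕ) < k then d i.succ - 1 else 0) + ℓ := by omega
      have hds : d 0 - (d 0 - 1) = 1 := by omega
      simp only [gval]
      rw [hm, harg, hds, one_mul]
      have IH : gval (List.ofFn fun i : Fin n => d i.succ)
            ((∑ i : Fin n, if (i : ℕ) < k then d i.succ - 1 else 0) + ℓ) =
          (d ⟨k + 1, hk⟩ - ℓ) * ∏ i : Fin n, if k + 1 ≤ (i : ℕ) then d i.succ else 1 :=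
        gval_formula k n (fun i => d i.succ) hk' ℓ (fun i => hd i.succ) hℓ
      rw [IH]
      have hprod2 : (∏ i : Fin (n+1), if k + 1 + 1 ≤ (i : ℕ) then d i else 1) =
          ∏ i : Fin n, if k + 1 ≤ (i : ℕ) then d i.succ else 1 := by
        rw [Fin.prod_univ_succ, if_neg (by simp), one_mul]
        exact Finset.prod_congr rfl fun i _ =>
          if_congr (by simp only [Fin.val_succ]; omega) rfl rfl
      rw [hprod2]

theorem stmt0 (n : ℕ) (d : Fin n → ℕ) (hd : ∀ i, 0 < d i) (hmono : Monotone d)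
    (s k ℓ : ℕ) (hk : k < n)
    (hstot : s ≤ ∑ i : Fin n, (d i - 1))
    (hs : s = (∑ i : Fin n, if (i : ℕ) < k then d i - 1 else 0) + ℓ)
    (hℓ : ℓ < d ⟨k, hk⟩ - 1) :
    IsLeast
      {m : ℕ | ∃ a : Fin n → ℕ, (∀ i, a i < d i) ∧ (∑ i : Fin n, a i) ≤ s ∧
        m = ∏ i : Fin n, (d i - a i)}
      ((d ⟨k, hk⟩ - ℓ) * ∏ i : Fin n, if k + 1 ≤ (i : ℕ) then d i else 1) := by
  constructor
  · -- membership : the greedy tuple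
    refine ⟨fun i => if (i : ℕ) < k then d i - 1 else if (i : ℕ) = k then ℓ else 0,
      ?_, ?_, ?_⟩
    · intro i
      by_cases h1 : (i : ℕ) < k
      · simp only [if_pos h1]; have := hd i; omega
      · by_cases h2 : (i : ℕ) = k
        · simp only [if_neg h1, if_pos h2]
          have : d i = d ⟨k, hk⟩ := by congr 1; exact Fin.ext h2
          omega
        · simp only [if_neg h1, if_neg h2]; exact hd i
    · -- sum = s
      have : (∑ i : Fin n, if (i : ℕ) < k then d i - 1 else
          if (i : ℕ) = k then ℓ else 0) =
          (∑ i : Fin n, if (i : ℕ) < k then d i - 1 else 0) +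
          (∑ i : Fin n, if (i : ℕ) = k then ℓ else 0) := by
        rw [← Finset.sum_add_distrib]
        apply Finset.sum_congr rfl
        intro i _
        by_cases h1 : (i : ℕ) < k
        · simp [h1, show (i : ℕ) ≠ k by omega]
        · simp [h1]
      rw [this]
      have : (∑ i : Fin n, if (i : ℕ) = k then ℓ else 0) = ℓ := by
        rw [Finset.sum_eq_single (⟨k, hk⟩ : Fin n)]
        · simp
        · intro b _ hb
          rw [if_neg]
          intro hbk
          exact hb (Fin.ext hbk)
        · simp
      rw [this, ← hs]
    · -- product value
      have : ∀ i : Fin n,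
          d i - (if (i : ℕ) < k then d i - 1 else if (i : ℕ) = k then ℓ else 0) =
          (if (i : ℕ) = k then d ⟨k, hk⟩ - ℓ else 1) *
          (if k + 1 ≤ (i : ℕ) then d i else 1) := by
        intro i
        by_cases h1 : (i : ℕ) < k
        · simp only [if_pos h1, if_neg (show (i : ℕ) ≠ k by omega),
            if_neg (show ¬ k + 1 ≤ (i : ℕ) by omega)]
          have := hd i; omega
        · by_cases h2 : (i : ℕ) = k
          · simp only [if_neg h1, if_pos h2, if_neg (show ¬ k + 1 ≤ (i : ℕ) by omega)]
            have : d i = d ⟨k, hk⟩ := by congr 1; exact Fin.ext h2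
            rw [this, mul_one]
          · simp only [if_neg h1, if_neg h2,
              if_pos (show k + 1 ≤ (i : ℕ) by omega), Nat.sub_zero, one_mul]
      rw [Finset.prod_congr rfl (fun i _ => this i), Finset.prod_mul_distrib]
      congr 1
      rw [Finset.prod_eq_single (⟨k, hk⟩ : Fin n)]
      · simp
      · intro b _ hb
        rw [if_neg]
        intro hbk
        exact hb (Fin.ext hbk)
      · simp
  · -- lower bound
    rintro m ⟨a, ha, hsum, rfl⟩
    calc (d ⟨k, hk⟩ - ℓ) * (∏ i : Fin n, if k + 1 ≤ (i : ℕ) then d i else 1)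
        = gval (List.ofFn d) s := by
          rw [hs, gval_formula k n d hk ℓ hd hℓ]
      _ ≤ gval (List.ofFn d) (∑ i, a i) := gval_anti _ _ _ hsum
      _ ≤ ∏ i : Fin n, (d i - a i) := gval_main n d a hmono ha
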